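/- Let A, F ∈ ℂ^{n×n}, h > 0, σ ∈ [0,1], Λ = I_n − A, and 𝒜 = σΛ + (1−σ)·exp(−Ah)·Λ. Let N ≥ 2, let λ_2,…,λ_N ∈ ℂ, and let J ∈ ℂ^{(N−1)×(N−1)} be upper triangular with diagonal entries λ_2,…,λ_N. Let s ∈ ℂ be such that sI_n − A is invertible, and set ϱ(s) = (1−σ)·(sI_n − A)^{−1}·(exp(−Ah) − e^{−sh}·I_n)·Λ. Then the determinant of the 2(N−1)n-dimensional block matrix [[I_{N−1} ⊗ (sI_n − A), −I_{N−1} ⊗ (σΛ + (1−σ)e^{−sh}Λ)], [J ⊗ F, I_{(N−1)n} + J ⊗ (F·ϱ(s))]] equals ∏_{i=2}^N det(sI_n − (A − λ_i·𝒜F)). -/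

import Mathlib

open Matrix
open scoped Kronecker

lemma det_one_add_kron {m n : ℕ} (J : Matrix (Fin m) (Fin m) ℂ)
    (hJlt : ∀ i j : Fin m, j < i → J i j = 0)
    (X : Matrix (Fin n) (Fin n) ℂ) :
    (1 + J ⊗ₖ X).det = ∏ i : Fin m, (1 + J i i • X).det := by
  have hbt : BlockTriangular (1 + J ⊗ₖ X) Prod.fst := by
    intro p q hlt
    have hne : p ≠ q := fun hpq => absurd (congrArg Prod.fst hpq) (ne_of_gt hlt)
    simp only [Matrix.add_apply, Matrix.one_apply, kroneckerMap_apply, if_neg hne,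
      hJlt _ _ hlt, zero_mul, add_zero]
  rw [hbt.det_fintype]
  refine Finset.prod_congr rfl fun k _ => ?_
  let e : {a : Fin m × Fin n // a.1 = k} ≃ Fin n :=
    { toFun := fun a => a.1.2
      invFun := fun q => ⟨(k, q), rfl⟩
      left_inv := fun a => Subtype.ext (Prod.ext a.2.symm rfl)
      right_inv := fun q => rfl }
  have hsb : (1 + J ⊗ₖ X).toSquareBlock Prod.fst k = (1 + J k k • X).submatrix e e := by
    ext i j
    rcases i with ⟨⟨i1, i2⟩, hi⟩
    rcases j with ⟨⟨j1, j2⟩, hj⟩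
    dsimp at hi hj
    subst hi; subst hj
    simp [Matrix.toSquareBlock, Matrix.toSquareBlockProp, Matrix.submatrix,
      Matrix.one_apply, Prod.ext_iff, e]
  rw [hsb, Matrix.det_submatrix_equiv_self]


/-- Characteristic determinant identity for the closed-loop memory dynamics in
Jordan coordinates: the determinant of the `2(N-1)n`-dimensional block matrix
equals `∏ᵢ det(sI - (A - λᵢ 𝒜F))`. -/
theorem stmt10 {n N : ℕ} (hN : 2 ≤ N)
    (A F : Matrix (Fin n) (Fin n) ℂ)
    (h σ : ℝ) (hh : 0 < h) (hσ : σ ∈ Set.Icc (0 : ℝ) 1)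
    (Λ : Matrix (Fin n) (Fin n) ℂ) (hΛ : Λ = 1 - A)
    (𝒜 : Matrix (Fin n) (Fin n) ℂ)
    (h𝒜 : 𝒜 = (σ : ℂ) • Λ
      + ((1 - σ : ℝ) : ℂ) • (NormedSpace.exp (-((h : ℂ) • A)) * Λ))
    (lam : Fin (N - 1) → ℂ)
    (J : Matrix (Fin (N - 1)) (Fin (N - 1)) ℂ)
    (hJdiag : ∀ i, J i i = lam i)
    (hJlt : ∀ i j : Fin (N - 1), j < i → J i j = 0)
    (s : ℂ)
    (hs : IsUnit (s • (1 : Matrix (Fin n) (Fin n) ℂ) - A))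
    (ϱ : Matrix (Fin n) (Fin n) ℂ)
    (hϱ : ϱ = ((1 - σ : ℝ) : ℂ) •
      ((s • (1 : Matrix (Fin n) (Fin n) ℂ) - A)⁻¹
        * (NormedSpace.exp (-((h : ℂ) • A)) - Complex.exp (-(s * h)) • 1) * Λ)) :
    (Matrix.fromBlocks
      ((1 : Matrix (Fin (N - 1)) (Fin (N - 1)) ℂ) ⊗ₖ (s • (1 : Matrix (Fin n) (Fin n) ℂ) - A))
      (-((1 : Matrix (Fin (N - 1)) (Fin (N - 1)) ℂ) ⊗ₖ
          ((σ : ℂ) • Λ + (((1 - σ : ℝ) : ℂ) * Complex.exp (-(s * h))) • Λ)))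
      (J ⊗ₖ F)
      (1 + J ⊗ₖ (F * ϱ))).det
      = ∏ i : Fin (N - 1),
          (s • (1 : Matrix (Fin n) (Fin n) ℂ) - (A - lam i • (𝒜 * F))).det := by
  set S : Matrix (Fin n) (Fin n) ℂ := s • (1 : Matrix (Fin n) (Fin n) ℂ) - A with hS
  set M : Matrix (Fin n) (Fin n) ℂ :=
    (σ : ℂ) • Λ + (((1 - σ : ℝ) : ℂ) * Complex.exp (-(s * h))) • Λ with hM
  have hdetS : IsUnit S.det := (Matrix.isUnit_iff_isUnit_det S).mp hs
  letI : Invertible S := hs.invertible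
  letI : Invertible ((1 : Matrix (Fin (N - 1)) (Fin (N - 1)) ℂ) ⊗ₖ S) :=
    ⟨(1 : Matrix (Fin (N - 1)) (Fin (N - 1)) ℂ) ⊗ₖ (⅟S),
      by rw [← mul_kronecker_mul, one_mul, invOf_mul_self, one_kronecker_one],
      by rw [← mul_kronecker_mul, one_mul, mul_invOf_self, one_kronecker_one]⟩
  have hinv : ⅟((1 : Matrix (Fin (N - 1)) (Fin (N - 1)) ℂ) ⊗ₖ S)
      = (1 : Matrix (Fin (N - 1)) (Fin (N - 1)) ℂ) ⊗ₖ S⁻¹ := by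
    rw [invOf_eq_nonsing_inv, inv_kronecker, inv_one]
  rw [Matrix.det_fromBlocks₁₁, hinv]
  -- simplify the Schur complement
  have hφ : ϱ = S⁻¹ * (𝒜 - M) := by
    rw [hϱ, h𝒜, hM, add_sub_add_left_eq_sub]
    simp only [Matrix.mul_assoc, Matrix.sub_mul, Matrix.smul_mul, Matrix.one_mul,
      Matrix.mul_sub, Matrix.mul_smul, smul_sub, smul_smul]
  have hkey : F * ϱ + F * (S⁻¹ * M) = F * (S⁻¹ * 𝒜) := by
    rw [← mul_add, hφ, ← Matrix.mul_add, sub_add_cancel]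
  have hschur : (1 + J ⊗ₖ (F * ϱ)
      - J ⊗ₖ F * ((1 : Matrix (Fin (N - 1)) (Fin (N - 1)) ℂ) ⊗ₖ S⁻¹) * -((1 : Matrix (Fin (N - 1)) (Fin (N - 1)) ℂ) ⊗ₖ M))
      = 1 + J ⊗ₖ (F * (S⁻¹ * 𝒜)) := by
    rw [mul_neg, sub_neg_eq_add, ← mul_kronecker_mul, ← mul_kronecker_mul, mul_one, mul_one,
      Matrix.mul_assoc, add_assoc, ← kronecker_add, hkey]
  rw [hschur, det_one_add_kron J hJlt, det_kronecker, Matrix.det_one, one_pow, one_mul]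
  have hpow : S.det ^ Fintype.card (Fin (N - 1)) = ∏ _i : Fin (N - 1), S.det := by
    rw [Finset.prod_const, Finset.card_univ]
  rw [hpow, ← Finset.prod_mul_distrib]
  refine Finset.prod_congr rfl fun i _ => ?_
  rw [hJdiag]
  have h1 : S.det * (1 + lam i • (F * (S⁻¹ * 𝒜))).det
      = (S + lam i • (𝒜 * F)).det := by
    have : (1 + lam i • (F * (S⁻¹ * 𝒜))).det = (1 + lam i • (S⁻¹ * (𝒜 * F))).det := by
      rw [show lam i • (F * (S⁻¹ * 𝒜)) = F * (lam i • (S⁻¹ * 𝒜)) by rw [Matrix.mul_smul],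
        Matrix.det_one_add_mul_comm,
        show lam i • (S⁻¹ * 𝒜) * F = lam i • (S⁻¹ * (𝒜 * F)) by
          rw [Matrix.smul_mul, Matrix.mul_assoc]]
    rw [this, ← Matrix.det_mul, Matrix.mul_add, Matrix.mul_one, Matrix.mul_smul,
      ← Matrix.mul_assoc, Matrix.mul_nonsing_inv _ hdetS, Matrix.one_mul]
  rw [h1]
  congr 1
  rw [hS]
  abel
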